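/- For each simple root α_i, the conjugated Hecke operator 𝔗_i satisfies 1 + 𝔗_i = (1 − qπ^{α_i∨})∘∂_i if α_i ∈ Φ⁺₋₁, and 1 + 𝔗_i = ∂_i∘(1 − qπ^{α_i∨}) if α_i ∈ Φ⁺_q, as operators on Frac(R), where (1 − qπ^{α_i∨}) denotes the multiplication operator. -/

import Mathlib

open scoped Classical

noncomputable section
namespace BBF

abbrev Lat (n : ℕ) := Fin n → ℤ

instance addAutGroupOld (A : Type) [Add A] : Group (AddAut A) where
  mul g h := AddEquiv.trans h g
  one := AddEquiv.refl _
  inv := AddEquiv.symm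
  mul_assoc _ _ _ := rfl
  one_mul _ := rfl
  mul_one _ := rfl
  inv_mul_cancel := AddEquiv.self_trans_symm

abbrev RootT (n : ℕ) := (Lat n) × ((Lat n) →+ ℤ)

def rneg {n : ℕ} (α : RootT n) : RootT n := (-α.1, -α.2)

def reflAut' {n : ℕ} (a : Lat n) (f : (Lat n) →+ ℤ) : AddAut (Lat n) :=
  if h : f a = 2 then
    { toFun := fun v => v - f v • a
      invFun := fun v => v - f v • a
      left_inv := by
        intro v
        have hf : f (v - f v • a) = - f v := by
          rw [map_sub, map_zsmul, smul_eq_mul, h]; ring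
        simp only [hf, neg_smul, sub_neg_eq_add, sub_add_cancel]
      right_inv := by
        intro v
        have hf : f (v - f v • a) = - f v := by
          rw [map_sub, map_zsmul, smul_eq_mul, h]; ring
        simp only [hf, neg_smul, sub_neg_eq_add, sub_add_cancel]
      map_add' := by
        intro x y
        simp only [map_add, add_smul]
        abel }
  else 1

def ract {n : ℕ} (u : AddAut (Lat n)) (α : RootT n) : RootT n :=
  (u α.1, α.2.comp u.symm.toAddMonoidHom)

/-- The raw data of a based root system on the coweight lattice `ℤⁿ`:
the set of roots `Φ`, the positive roots `pos`, the simple roots, (half the sum of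
the positive coroots) `rho`, and the longest Weyl group element `w0`.  Each root is
recorded as the pair (coroot, pairing functional ⟨α, ·⟩). -/
structure PreCtx (n : ℕ) where
  Φ : Finset (RootT n)
  pos : Finset (RootT n)
  simple : Fin n → RootT n
  rho : Lat n
  w0 : AddAut (Lat n)

variable {n : ℕ}

/-- The simple reflections. -/
def PreCtx.sref (C : PreCtx n) (i : Fin n) : AddAut (Lat n) :=
  reflAut' (C.simple i).1 (C.simple i).2

/-- The Weyl group, generated by the simple reflections. -/
def PreCtx.W (C : PreCtx n) : Subgroup (AddAut (Lat n)) :=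
  Subgroup.closure (Set.range C.sref)

/-- The product `s_{i₁} ⋯ s_{i_k}` attached to a word in the simple reflections. -/
def PreCtx.wordProd (C : PreCtx n) (l : List (Fin n)) : AddAut (Lat n) :=
  (l.map C.sref).prod

/-- The length of a Weyl group element: the minimal length of an expression as a
product of simple reflections. -/
def PreCtx.len (C : PreCtx n) (w : AddAut (Lat n)) : ℕ :=
  sInf {k | ∃ l : List (Fin n), C.wordProd l = w ∧ l.length = k}

/-- `l` is a reduced word for `w`. -/
def PreCtx.IsReduced (C : PreCtx n) (w : AddAut (Lat n)) (l : List (Fin n)) : Prop :=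
  C.wordProd l = w ∧ l.length = C.len w

/-- A choice of reduced word for each Weyl group element. -/
def PreCtx.redWord (C : PreCtx n) (w : AddAut (Lat n)) : List (Fin n) :=
  if h : ∃ l, C.IsReduced w l then h.choose else []

/-- The axioms making `C : PreCtx n` a (reduced crystallographic) based root system:
`⟨α, α∨⟩ = 2`; `Φ = Φ⁺ ⊔ (−Φ⁺)`; the simple roots are positive; `Φ` is stable under the
simple reflections, and `s_i` permutes the positive roots other than `α_i`; every positive
root is Weyl-conjugate to a simple root; `2ρ∨` is the sum of the positive coroots; the Weyl
group is finite with longest element `w0`. -/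
structure IsRootCtx (C : PreCtx n) : Prop where
  pairing_self : ∀ α ∈ C.Φ, α.2 α.1 = 2
  pos_subset : C.pos ⊆ C.Φ
  simple_mem : ∀ i, C.simple i ∈ C.pos
  simple_inj : Function.Injective C.simple
  neg_mem : ∀ α ∈ C.Φ, rneg α ∈ C.Φ
  pos_decomp : C.Φ = C.pos ∪ C.pos.image rneg
  pos_disj : Disjoint C.pos (C.pos.image rneg)
  refl_stable : ∀ i, ∀ α ∈ C.Φ, ract (C.sref i) α ∈ C.Φ
  refl_pos : ∀ i, ∀ α ∈ C.pos, α ≠ C.simple i → ract (C.sref i) α ∈ C.pos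
  simple_conj : ∀ α ∈ C.pos, ∃ w ∈ C.W, ∃ i, ract w (C.simple i) = α
  rho_spec : (2 : ℤ) • C.rho = ∑ α ∈ C.pos, α.1
  Wfin : (C.W : Set (AddAut (Lat n))).Finite
  w0_mem : C.w0 ∈ C.W
  w0_max : ∀ w ∈ C.W, C.len w ≤ C.len C.w0

/-- A Hecke character datum: the set `neg1 = Φ⁺₋₁` of positive roots on which the character
acts by `−1` (the complement `pos \ neg1 = Φ⁺_q` acts by `q`), such that
`Φ⁺₋₁ ∪ (−Φ⁺₋₁)` and `Φ⁺_q ∪ (−Φ⁺_q)` are stable under the Weyl group. -/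
structure IsEps (C : PreCtx n) (neg1 : Finset (RootT n)) : Prop where
  subset : neg1 ⊆ C.pos
  stable_neg1 : ∀ w ∈ C.W, ∀ α : RootT n, (α ∈ neg1 ∨ rneg α ∈ neg1) →
      (ract w α ∈ neg1 ∨ rneg (ract w α) ∈ neg1)
  stable_q : ∀ w ∈ C.W, ∀ α : RootT n, (α ∈ C.pos \ neg1 ∨ rneg α ∈ C.pos \ neg1) →
      (ract w α ∈ C.pos \ neg1 ∨ rneg (ract w α) ∈ C.pos \ neg1)


section Alg

/-- `ℂ[q,q⁻¹]`, the ring of Laurent polynomials in `q` over `ℂ`. -/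
abbrev LP := LaurentPolynomial ℂ

/-- The group algebra `k[P∨]` of the coweight lattice. -/
abbrev Rng (k : Type) [CommRing k] (n : ℕ) : Type := AddMonoidAlgebra k (Lat n)

instance (k : Type) [CommRing k] [IsDomain k] (n : ℕ) : IsDomain (Rng k n) :=
  NoZeroDivisors.to_isDomain _

variable (k : Type) [CommRing k] {n : ℕ}

/-- The basis element `π^μ` of the group algebra. -/
def piR (μ : Lat n) : Rng k n := AddMonoidAlgebra.single μ 1

/-- `q` as an element of `ℂ[q,q⁻¹][P∨]`. -/
def qR (n : ℕ) : Rng LP n := AddMonoidAlgebra.single 0 (LaurentPolynomial.T 1)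

/-- The ring automorphism of `k[P∨]` induced by an automorphism of `P∨`. -/
def actR (u : AddAut (Lat n)) : Rng k n ≃ₐ[k] Rng k n :=
  AddMonoidAlgebra.domCongr k k u

variable (K : Type) [Field K]

/-- The image of `π^μ` in the fraction field of `k[P∨]`. -/
def piK [Algebra (Rng k n) K] (μ : Lat n) : K := algebraMap (Rng k n) K (piR k μ)

/-- The image of `q` in the fraction field of `ℂ[q,q⁻¹][P∨]`. -/
def qK (n : ℕ) [Algebra (Rng LP n) K] : K := algebraMap (Rng LP n) K (qR n)

/-- The field endomorphism of the fraction field of `k[P∨]` induced by an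
automorphism of `P∨` (e.g. a Weyl group element). -/
def actK [Algebra (Rng k n) K] [IsFractionRing (Rng k n) K] (u : AddAut (Lat n)) : K →+* K :=
  IsFractionRing.lift
    (g := (algebraMap (Rng k n) K).comp ((actR k u : Rng k n ≃+* Rng k n) : Rng k n →+* Rng k n))
    (by
      rw [RingHom.coe_comp]
      exact (IsFractionRing.injective (Rng k n) K).comp (actR k u).injective)

end Alg

section GenericOps

variable (k : Type) [CommRing k] {n : ℕ}
variable (K : Type) [Field K] [Algebra (Rng k n) K] [IsFractionRing (Rng k n) K]
variable (C : PreCtx n)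

/-- The Demazure operator `∂_i f = (π^{−α_i∨}·f − s_i(f))/(π^{−α_i∨} − 1)` on `Frac(k[P∨])`. -/
def Dem (i : Fin n) (f : K) : K :=
  (piK k K (-(C.simple i).1) * f - actK k K (C.sref i) f) / (piK k K (-(C.simple i).1) - 1)

/-- The composite `∂_{i₁} ∘ ⋯ ∘ ∂_{i_k}` of Demazure operators along a word. -/
def Demword (l : List (Fin n)) : K → K :=
  l.foldr (fun i F => fun f => Dem k K C i (F f)) id

/-- The operator `𝔇_i = ∂_i − 1`. -/
def DD (i : Fin n) (f : K) : K := Dem k K C i f - f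

/-- The composite `𝔇_{i₁} ∘ ⋯ ∘ 𝔇_{i_k}` along a word. -/
def DDword (l : List (Fin n)) : K → K :=
  l.foldr (fun i F => fun f => DD k K C i (F f)) id

/-- `𝔇_w`, computed using a chosen reduced word for `w`. -/
def DDw (w : AddAut (Lat n)) : K → K := DDword k K C (C.redWord w)

/-- The alternator `𝒜 = ∑_{w ∈ W} (−1)^{ℓ(w)} w` as an operator. -/
def Alt (f : K) : K :=
  ∑ᶠ w ∈ (C.W : Set (AddAut (Lat n))), (-1 : K) ^ (C.len w) * actK k K w f

end GenericOps

section HeckeOps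

variable {n : ℕ}
variable (K : Type) [Field K] [Algebra (Rng LP n) K] [IsFractionRing (Rng LP n) K]
variable (C : PreCtx n)

/-- The Hecke operator `T_i` attached to the character datum `neg1`:
`T_i f = (ε_i + (1−q)/(1−π^{−α_i∨}))·s_i(f) + ((q−1)/(1−π^{−α_i∨}))·f`,
where `ε_i = −1` if `α_i ∈ Φ⁺₋₁` and `ε_i = q` otherwise. -/
def Ti (neg1 : Finset (RootT n)) (i : Fin n) (f : K) : K :=
  ((if C.simple i ∈ neg1 then (-1 : K) else qK K n)
      + (1 - qK K n) / (1 - piK LP K (-(C.simple i).1))) * actK LP K (C.sref i) f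
    + ((qK K n - 1) / (1 - piK LP K (-(C.simple i).1))) * f

/-- The composite `T_{i₁} ∘ ⋯ ∘ T_{i_k}` along a word. -/
def Tword (neg1 : Finset (RootT n)) (l : List (Fin n)) : K → K :=
  l.foldr (fun i F => fun f => Ti K C neg1 i (F f)) id

/-- `T_w`, computed using a chosen reduced word for `w`. -/
def Tw (neg1 : Finset (RootT n)) (w : AddAut (Lat n)) : K → K :=
  Tword K C neg1 (C.redWord w)

/-- The conjugated Hecke operator `𝔗_i = π^{ρ∨_ε} ∘ T_i ∘ π^{−ρ∨_ε}`. -/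
def Tfrak (neg1 : Finset (RootT n)) (rE : Lat n) (i : Fin n) (f : K) : K :=
  piK LP K rE * Ti K C neg1 i (piK LP K (-rE) * f)

/-- The composite `𝔗_{i₁} ∘ ⋯ ∘ 𝔗_{i_k}` along a word. -/
def Tfrakword (neg1 : Finset (RootT n)) (rE : Lat n) (l : List (Fin n)) : K → K :=
  l.foldr (fun i F => fun f => Tfrak K C neg1 rE i (F f)) id

/-- `𝔗_w`, computed using a chosen reduced word for `w`. -/
def TfrakW (neg1 : Finset (RootT n)) (rE : Lat n) (w : AddAut (Lat n)) : K → K :=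
  Tfrakword K C neg1 rE (C.redWord w)

/-- The operator `∑_{w ∈ W} 𝔗_w`. -/
def SumTfrak (neg1 : Finset (RootT n)) (rE : Lat n) (f : K) : K :=
  ∑ᶠ w ∈ (C.W : Set (AddAut (Lat n))), TfrakW K C neg1 rE w f

/-- The multiplication operator `∏_{α ∈ S} (1 − q π^{α∨})` for a set `S` of roots. -/
def Dprod (S : Finset (RootT n)) : K := ∏ α ∈ S, (1 - qK K n * piK LP K α.1)

/-- The operator `Ω' = D₋₁^{−1} ∘ (∑_{w∈W} 𝔗_w) ∘ D_q^{−1}`. -/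
def Omega' (neg1 : Finset (RootT n)) (rE : Lat n) (f : K) : K :=
  (Dprod K neg1)⁻¹ * SumTfrak K C neg1 rE ((Dprod K (C.pos \ neg1))⁻¹ * f)

end HeckeOps



section Aux

variable {n : ℕ}

lemma piK_mul (k : Type) [CommRing k] (K : Type) [Field K] [Algebra (Rng k n) K]
    (a b : Lat n) : piK k K (a + b) = piK k K a * piK k K b := by
  unfold piK piR
  rw [← map_mul, AddMonoidAlgebra.single_mul_single, one_mul]

lemma piK_zero (k : Type) [CommRing k] (K : Type) [Field K] [Algebra (Rng k n) K] :
    piK k K (0 : Lat n) = 1 := by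
  unfold piK piR
  rw [← AddMonoidAlgebra.one_def, map_one]

lemma piK_neg_mul (k : Type) [CommRing k] (K : Type) [Field K] [Algebra (Rng k n) K]
    (a : Lat n) : piK k K (-a) * piK k K a = 1 := by
  rw [← piK_mul k K (-a) a, neg_add_cancel, piK_zero]

lemma piK_ne_zero (k : Type) [CommRing k] (K : Type) [Field K] [Algebra (Rng k n) K]
    (a : Lat n) : piK k K a ≠ 0 :=
  right_ne_zero_of_mul_eq_one (piK_neg_mul k K a)

lemma piK_inv (k : Type) [CommRing k] (K : Type) [Field K] [Algebra (Rng k n) K]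
    (a : Lat n) : piK k K a = (piK k K (-a))⁻¹ :=
  eq_inv_of_mul_eq_one_left (by rw [mul_comm]; exact piK_neg_mul k K a)

lemma actK_algMap (k : Type) [CommRing k] (K : Type) [Field K] [Algebra (Rng k n) K]
    [IsFractionRing (Rng k n) K] (u : AddAut (Lat n)) (r : Rng k n) :
    actK k K u (algebraMap (Rng k n) K r) = algebraMap (Rng k n) K (actR k u r) := by
  unfold actK
  rw [IsFractionRing.lift_algebraMap]
  rfl

lemma actK_piK (k : Type) [CommRing k] (K : Type) [Field K] [Algebra (Rng k n) K]
    [IsFractionRing (Rng k n) K] (u : AddAut (Lat n)) (a : Lat n) :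
    actK k K u (piK k K a) = piK k K (u a) := by
  unfold piK
  rw [actK_algMap]
  congr 1
  unfold piR actR
  simp [AddMonoidAlgebra.domCongr_single]

lemma actK_qK (K : Type) [Field K] [Algebra (Rng LP n) K]
    [IsFractionRing (Rng LP n) K] (u : AddAut (Lat n)) :
    actK LP K u (qK K n) = qK K n := by
  unfold qK
  rw [actK_algMap]
  congr 1
  unfold qR actR
  simp [AddMonoidAlgebra.domCongr_single]

lemma piK_ne_one (k : Type) [CommRing k] [Nontrivial k] (K : Type) [Field K]
    [Algebra (Rng k n) K] [IsFractionRing (Rng k n) K] {a : Lat n} (ha : a ≠ 0) :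
    piK k K a ≠ 1 := by
  intro h
  have h1 : piK k K a = algebraMap (Rng k n) K 1 := by rw [h, map_one]
  have h2 := IsFractionRing.injective (Rng k n) K h1
  unfold piR at h2
  rw [AddMonoidAlgebra.one_def, AddMonoidAlgebra.single, AddMonoidAlgebra.single,
    AddMonoidAlgebra.ofCoeff_inj, Finsupp.single_eq_single_iff] at h2
  rcases h2 with ⟨h4, _⟩ | ⟨h4, _⟩
  · exact ha h4
  · exact one_ne_zero h4

end Aux

/-- for each simple root `α_i`, the conjugated Hecke operator `𝔗_i`
satisfies `1 + 𝔗_i = (1 − qπ^{α_i∨}) ∘ ∂_i` if `α_i ∈ Φ⁺₋₁`, and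
`1 + 𝔗_i = ∂_i ∘ (1 − qπ^{α_i∨})` if `α_i ∈ Φ⁺_q`, as operators on `Frac(R)`. -/
theorem statement4 (n : ℕ) (C : PreCtx n) (hC : IsRootCtx C)
    (neg1 : Finset (RootT n)) (hE : IsEps C neg1)
    (K : Type) [Field K] [Algebra (Rng LP n) K] [IsFractionRing (Rng LP n) K]
    (rE : Lat n) (hrE : (2 : ℤ) • rE = ∑ α ∈ neg1, α.1) :
    ∀ (i : Fin n) (f : K),
      (C.simple i ∈ neg1 →
        f + Tfrak K C neg1 rE i f
          = (1 - qK K n * piK LP K ((C.simple i).1)) * Dem LP K C i f)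
      ∧ (C.simple i ∈ C.pos \ neg1 →
        f + Tfrak K C neg1 rE i f
          = Dem LP K C i ((1 - qK K n * piK LP K ((C.simple i).1)) * f)) := by
  intro i f
  set a := (C.simple i).1 with ha_def
  set g := (C.simple i).2 with hg_def
  have hmemPhi : C.simple i ∈ C.Φ := hC.pos_subset (hC.simple_mem i)
  have h2 : g a = 2 := hC.pairing_self _ hmemPhi
  have hsref : ∀ v, C.sref i v = v - g v • a := by
    intro v
    unfold PreCtx.sref reflAut'
    rw [dif_pos h2]
    rfl
  have ha0 : a ≠ 0 := by
    intro h
    rw [h, map_zero] at h2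
    exact two_ne_zero h2.symm
  have hss : ∀ v, C.sref i (C.sref i v) = v := by
    intro v
    rw [hsref, hsref]
    have hf : g (v - g v • a) = - g v := by
      rw [map_sub, map_zsmul, h2, smul_eq_mul]; ring
    rw [hf, neg_smul, sub_neg_eq_add, sub_add_cancel]
  have hsymm : ∀ v, (C.sref i).symm v = C.sref i v := by
    intro v
    calc (C.sref i).symm v = (C.sref i).symm (C.sref i (C.sref i v)) := by rw [hss]
      _ = C.sref i v := (C.sref i).symm_apply_apply _
  have hσσ : ∀ α : RootT n, ract (C.sref i) (ract (C.sref i) α) = α := by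
    intro α
    unfold ract
    refine Prod.ext (hss α.1) ?_
    refine AddMonoidHom.ext fun v => ?_
    show α.2 ((C.sref i).symm ((C.sref i).symm v)) = α.2 v
    rw [hsymm, hsymm, hss]
  have hsref_mem : C.sref i ∈ C.W := Subgroup.subset_closure ⟨i, rfl⟩
  have hnegpos : ∀ α ∈ C.pos, rneg α ∉ C.pos := by
    intro α hα hcon
    exact Finset.disjoint_left.mp hC.pos_disj hcon (Finset.mem_image_of_mem rneg hα)
  have ha_sref : C.sref i a = -a := by
    rw [hsref, h2]
    abel
  have hσ_simple : ract (C.sref i) (C.simple i) = rneg (C.simple i) := by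
    unfold ract rneg
    refine Prod.ext ha_sref ?_
    refine AddMonoidHom.ext fun v => ?_
    show g ((C.sref i).symm v) = - g v
    rw [hsymm, hsref, map_sub, map_zsmul, h2, smul_eq_mul]
    ring
  have key1 : ∀ α ∈ neg1, α ≠ C.simple i →
      ract (C.sref i) α ∈ neg1 ∧ ract (C.sref i) α ≠ C.simple i := by
    intro α hα hne
    have hαpos := hE.subset hα
    have hp : ract (C.sref i) α ∈ C.pos := hC.refl_pos i α hαpos hne
    have hst := hE.stable_neg1 _ hsref_mem α (Or.inl hα)
    constructor
    · rcases hst with h | h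
      · exact h
      · exact absurd (hE.subset h) (by
          intro hcon
          have := hnegpos _ hp
          exact this hcon)
    · intro hcon
      have h5 : α = ract (C.sref i) (C.simple i) := by rw [← hcon, hσσ]
      rw [hσ_simple] at h5
      exact hnegpos _ (hC.simple_mem i) (h5 ▸ hαpos)
  -- pairing of α_i with rE
  have hcgen : (C.simple i ∈ neg1 → g rE = 1) ∧ (C.simple i ∉ neg1 → g rE = 0) := by
    constructor
    · intro hmem
      have hsums : ∑ α ∈ neg1.erase (C.simple i), C.sref i α.1
          = ∑ α ∈ neg1.erase (C.simple i), α.1 := by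
        refine Finset.sum_nbij' (fun α => ract (C.sref i) α) (fun α => ract (C.sref i) α)
          ?_ ?_ (fun α _ => hσσ α) (fun α _ => hσσ α) (fun α _ => rfl)
        · intro α hα
          rw [Finset.mem_erase] at hα ⊢
          exact ⟨(key1 α hα.2 hα.1).2, (key1 α hα.2 hα.1).1⟩
        · intro α hα
          rw [Finset.mem_erase] at hα ⊢
          exact ⟨(key1 α hα.2 hα.1).2, (key1 α hα.2 hα.1).1⟩
      have E : C.sref i ((2:ℤ) • rE) = C.sref i a + ((2:ℤ) • rE - a) := by
        have e3 : a + ∑ α ∈ neg1.erase (C.simple i), α.1 = (2:ℤ) • rE := by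
          rw [hrE]; exact Finset.add_sum_erase _ (fun α : RootT n => α.1) hmem
        calc C.sref i ((2:ℤ) • rE) = ∑ α ∈ neg1, C.sref i α.1 := by
              rw [hrE, map_sum]
          _ = C.sref i a + ∑ α ∈ neg1.erase (C.simple i), C.sref i α.1 := by
              rw [Finset.add_sum_erase _ (fun α => C.sref i α.1) hmem]
          _ = C.sref i a + ((2:ℤ) • rE - a) := by
              rw [hsums, ← e3]; abel
      rw [hsref] at E
      have E2 := congrArg g E
      simp only [map_sub, map_add, map_zsmul, map_neg, h2, smul_eq_mul, ha_sref] at E2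
      omega
    · intro hmem
      have hsums : ∑ α ∈ neg1, C.sref i α.1 = ∑ α ∈ neg1, α.1 := by
        refine Finset.sum_nbij' (fun α => ract (C.sref i) α) (fun α => ract (C.sref i) α)
          ?_ ?_ (fun α _ => hσσ α) (fun α _ => hσσ α) (fun α _ => rfl)
        · intro α hα
          exact (key1 α hα (by rintro rfl; exact hmem hα)).1
        · intro α hα
          exact (key1 α hα (by rintro rfl; exact hmem hα)).1
      have E : C.sref i ((2:ℤ) • rE) = (2:ℤ) • rE := by
        rw [hrE, map_sum, hsums]
      rw [hsref] at E
      have E2 := congrArg g E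
      simp only [map_sub, map_zsmul, h2, smul_eq_mul] at E2
      omega
  -- field setup
  set q : K := qK K n with hq_def
  set x : K := piK LP K (-a) with hx_def
  set r : K := piK LP K (-rE) with hr_def
  have hx0 : x ≠ 0 := piK_ne_zero LP K (-a)
  have hr0 : r ≠ 0 := piK_ne_zero LP K (-rE)
  have hx1 : x ≠ 1 := piK_ne_one LP K (neg_ne_zero.mpr ha0)
  have hx1' : x - 1 ≠ 0 := sub_ne_zero.mpr hx1
  have hx1'' : (1 : K) - x ≠ 0 := sub_ne_zero.mpr (Ne.symm hx1)
  have hpa : piK LP K a = x⁻¹ := by rw [hx_def]; exact piK_inv LP K a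
  have hprE : piK LP K rE = r⁻¹ := by rw [hr_def]; exact piK_inv LP K rE
  have hsq : actK LP K (C.sref i) q = q := actK_qK K _
  have hsa : actK LP K (C.sref i) (piK LP K a) = x := by
    rw [actK_piK, ha_sref]
  have hsf : actK LP K (C.sref i) (piK LP K (-rE) * f)
      = piK LP K (C.sref i (-rE)) * actK LP K (C.sref i) f := by
    rw [map_mul, actK_piK]
  set b : K := actK LP K (C.sref i) f with hb_def
  constructor
  · intro hmem
    have hc : g rE = 1 := hcgen.1 hmem
    have hsrE : C.sref i (-rE) = -rE + a := by
      rw [hsref, map_neg, hc]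
      abel
    have hsf2 : actK LP K (C.sref i) (piK LP K (-rE) * f) = r * x⁻¹ * b := by
      rw [hsf, hsrE, piK_mul, hpa, ← hr_def]
    simp only [Tfrak, Ti, Dem, if_pos hmem]
    rw [hsf2, hprE, hpa, ← hx_def, ← hr_def, ← hq_def]
    field_simp
    ring
  · intro hmem
    have hmem' : C.simple i ∉ neg1 := (Finset.mem_sdiff.mp hmem).2
    have hc : g rE = 0 := hcgen.2 hmem'
    have hsrE : C.sref i (-rE) = -rE := by
      rw [hsref, map_neg, hc]
      simp
    have hsf2 : actK LP K (C.sref i) (piK LP K (-rE) * f) = r * b := by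
      rw [hsf, hsrE, ← hr_def]
    have hsg : actK LP K (C.sref i) ((1 - q * piK LP K a) * f) = (1 - q * x) * b := by
      rw [map_mul, map_sub, map_one, map_mul, hsq, hsa]
    simp only [Tfrak, Ti, Dem, if_neg hmem']
    rw [hsf2, hprE, hsg, hpa, ← hx_def, ← hr_def, ← hq_def]
    field_simp
    ring


end BBF

end
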